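/- Let V be a finite-dimensional real normed vector space, let J : ℝ → L(V,V) be a differentiable family with J(t) ∘ J(t) = -id for all t, K(t) := J'(t), and let g : ℝ → (symmetric bilinear forms on V) be a differentiable family with g'(t) = H(t) + F(t), where H(t) is symmetric and J(t)-invariant, F(t) is symmetric and J(t)-anti-invariant, and suppose g(t) is compatible with J(t) for every t. Define the associated Kähler forms ω(t)(u,v) := g(t)(J(t)u, v). Then for all t and all u,v ∈ V, ω'(t)(u,v) = H(t)(J(t)u, v) + (1/2)·( g(t)(K(t)u, v) - g(t)(u, K(t)v) ). -/

import Mathlib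

/-- Lemma 4.2, second part: the induced variation of the Kähler form
`ω t (u,v) = g t (J t u, v)` of a compatible family. -/
theorem statement3 {V : Type*} [NormedAddCommGroup V] [NormedSpace ℝ V]
    [FiniteDimensional ℝ V]
    (J : ℝ → V →L[ℝ] V) (hJdiff : Differentiable ℝ J)
    (hJsq : ∀ t : ℝ, (J t).comp (J t) = -(ContinuousLinearMap.id ℝ V))
    (g H F : ℝ → V →L[ℝ] V →L[ℝ] ℝ)
    (hgdiff : Differentiable ℝ g)
    (hgsym : ∀ (t : ℝ) (u v : V), g t u v = g t v u)
    (hHsym : ∀ (t : ℝ) (u v : V), H t u v = H t v u)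
    (hFsym : ∀ (t : ℝ) (u v : V), F t u v = F t v u)
    (hHinv : ∀ (t : ℝ) (u v : V), H t (J t u) (J t v) = H t u v)
    (hFanti : ∀ (t : ℝ) (u v : V), F t (J t u) (J t v) = -(F t u v))
    (hderiv : ∀ t : ℝ, deriv g t = H t + F t)
    (hcompat : ∀ (t : ℝ) (u v : V), g t (J t u) (J t v) = g t u v) :
    ∀ (t : ℝ) (u v : V),
      deriv (fun s : ℝ => g s (J s u) v) t =
        H t (J t u) v + (1/2) * (g t (deriv J t u) v - g t u (deriv J t v)) := by
  intro t u v
  set K := deriv J t with hKdef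
  have hgd : HasDerivAt g (deriv g t) t := (hgdiff t).hasDerivAt (f := g)
  have hJd : HasDerivAt J K t := (hJdiff t).hasDerivAt
  have hJu : ∀ w : V, HasDerivAt (fun s => J s w) (K w) t := fun w => by
    simpa using hJd.clm_apply (hasDerivAt_const t w)
  have hJJ : ∀ w : V, J t (J t w) = -w := by
    intro w
    have := congrArg (fun A : V →L[ℝ] V => A w) (hJsq t)
    simpa using this
  -- K J + J K = 0
  have hKJ : ∀ w : V, K (J t w) = -(J t (K w)) := by
    intro w
    have h1 : HasDerivAt (fun s => (J s).comp (J s)) (K.comp (J t) + (J t).comp K) t :=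
      hJd.clm_comp hJd
    have h2 : HasDerivAt (fun s => (J s).comp (J s)) 0 t := by
      have heq : (fun s => (J s).comp (J s)) = fun _ => -(ContinuousLinearMap.id ℝ V) :=
        funext hJsq
      rw [heq]; exact hasDerivAt_const t _
    have h3 := h1.unique h2
    have := congrArg (fun A : V →L[ℝ] V => A w) h3
    simp only [ContinuousLinearMap.add_apply, ContinuousLinearMap.comp_apply,
      ContinuousLinearMap.zero_apply] at this
    exact eq_neg_of_add_eq_zero_left this
  -- differentiated compatibility
  have hcomp : ∀ a b : V,
      deriv g t (J t a) (J t b) + g t (K a) (J t b) + g t (J t a) (K b)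
        = deriv g t a b := by
    intro a b
    have hL : HasDerivAt (fun s => g s (J s a) (J s b))
        ((deriv g t (J t a) + g t (K a)) (J t b) + g t (J t a) (K b)) t :=
      (hgd.clm_apply (hJu a)).clm_apply (hJu b)
    have hR : HasDerivAt (fun s => g s a b) (deriv g t a b) t := by
      simpa using (hgd.clm_apply (hasDerivAt_const t a)).clm_apply (hasDerivAt_const t b)
    have heq : (fun s => g s (J s a) (J s b)) = fun s => g s a b :=
      funext fun s => hcompat s a b
    have h := (heq ▸ hL).unique hR
    simpa [ContinuousLinearMap.add_apply] using h
  -- main derivative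
  have hmain : HasDerivAt (fun s : ℝ => g s (J s u) v)
      ((deriv g t (J t u) + g t (K u)) v) t := by
    simpa using (hgd.clm_apply (hJu u)).clm_apply (hasDerivAt_const t v)
  rw [hmain.deriv]
  -- key identity for F
  have hkey := hcomp u (-(J t v))
  have e1 : J t (-(J t v)) = v := by rw [map_neg, hJJ, neg_neg]
  have e2 : K (-(J t v)) = J t (K v) := by rw [map_neg, hKJ, neg_neg]
  rw [e1, e2] at hkey
  -- hkey : deriv g t (J t u) v + g t (K u) v + g t (J t u) (J t (K v)) = deriv g t u (-(J t v))
  have e3 : g t (J t u) (J t (K v)) = g t u (K v) := hcompat t u (K v)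
  rw [e3, hderiv t] at hkey
  simp only [ContinuousLinearMap.add_apply, map_neg] at hkey
  -- H t u (J t v) = -(H t (J t u) v)
  have eH : H t u (J t v) = -(H t (J t u) v) := by
    have := hHinv t u (J t v)
    rw [hJJ] at this
    simp only [map_neg, ContinuousLinearMap.neg_apply] at this
    linarith
  -- F t u (J t v) = F t (J t u) v
  have eF : F t u (J t v) = F t (J t u) v := by
    have := hFanti t u (J t v)
    rw [hJJ] at this
    simp only [map_neg, ContinuousLinearMap.neg_apply] at this
    linarith
  rw [eH, eF] at hkey
  -- hkey now gives 2 F t (J t u) v = -(g t (K u) v + g t u (K v))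
  rw [hderiv t]
  simp only [ContinuousLinearMap.add_apply]
  linarith
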